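/- Let (H,s,t) be a two-rooted graph that is inherent, and let H' be any graph vertex-disjoint from H. Then the two-rooted graph (H + H', s, t), where H + H' denotes the disjoint union of H and H', is also inherent. -/

import Mathlib

open SimpleGraph

/-- Closed neighborhood of a vertex set. -/
def closedNbhd {V : Type*} (G : SimpleGraph V) (S : Set V) : Set V :=
  S ∪ {v | ∃ u ∈ S, G.Adj u v}

/-- Open neighborhood of a vertex set. -/
def openNbhd {V : Type*} (G : SimpleGraph V) (S : Set V) : Set V :=
  {v | v ∉ S ∧ ∃ u ∈ S, G.Adj u v}

/-- A walk that is an induced path. -/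
def IsInducedPathW {V : Type*} (G : SimpleGraph V) {a b : V} (p : G.Walk a b) : Prop :=
  p.IsPath ∧ ∀ u ∈ p.support, ∀ v ∈ p.support, G.Adj u v → s(u, v) ∈ p.edges

/-- The extension with pendant vertices `s'`, `t'` attached to a copy with vertex set `S`
is closable: there is an induced `s',t'`-path meeting `N[S ∪ {s',t'}]` only in `s'` and `t'`. -/
def Closable {V : Type*} (G : SimpleGraph V) (S : Set V) (s' t' : V) : Prop :=
  ∃ p : G.Walk s' t', IsInducedPathW G p ∧
    ∀ v ∈ p.support, v ∈ closedNbhd G (S ∪ {s', t'}) → v = s' ∨ v = t'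

/-- `f` realizes an induced copy of `H` in `G`. -/
def IsCopy {V α : Type*} (G : SimpleGraph V) (H : SimpleGraph α) (f : α → V) : Prop :=
  Function.Injective f ∧ ∀ x y : α, H.Adj x y ↔ G.Adj (f x) (f y)

/-- `(s', t')` is an extension of the copy `f` of the two-rooted graph `(H, s, t)` in `G`:
two pendant edges at the images of the roots. -/
def IsExtension {V α : Type*} (G : SimpleGraph V) (H : SimpleGraph α) (f : α → V)
    (s t : α) (s' t' : V) : Prop :=
  s' ≠ t' ∧ (∀ x, f x ≠ s') ∧ (∀ x, f x ≠ t') ∧ ¬ G.Adj s' t' ∧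
  G.Adj (f s) s' ∧ G.Adj (f t) t' ∧
  (∀ x, f x ≠ f s → ¬ G.Adj (f x) s') ∧ (∀ x, f x ≠ f t → ¬ G.Adj (f x) t')

/-- An avoidable copy of the two-rooted graph `(H, s, t)` in `G`. -/
def AvoidableCopy {V α : Type*} (G : SimpleGraph V) (H : SimpleGraph α) (f : α → V)
    (s t : α) : Prop :=
  IsCopy G H f ∧ ∀ s' t' : V, IsExtension G H f s t s' t' →
    Closable G (Set.range f) s' t'

/-- The two-rooted graph `(H, s, t)` is inherent. -/
def Inherent {α : Type} [Fintype α] (H : SimpleGraph α) (s t : α) : Prop :=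
  ∀ (V : Type) (_ : Fintype V) (G : SimpleGraph V),
    (∃ f : α → V, IsCopy G H f) → ∃ f : α → V, AvoidableCopy G H f s t

/-- `G` confines the two-rooted graph `(H, s, t)`. -/
def Confines {V α : Type*} (G : SimpleGraph V) (H : SimpleGraph α) (s t : α) : Prop :=
  (∃ f : α → V, IsCopy G H f) ∧ ∀ f : α → V, ¬ AvoidableCopy G H f s t

/-- `G` contains an induced path on three vertices. -/
def HasInducedP3 {V : Type*} (G : SimpleGraph V) : Prop :=
  ∃ x y z : V, G.Adj x y ∧ G.Adj y z ∧ x ≠ z ∧ ¬ G.Adj x z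

/-- if `(H, s, t)` is inherent then so is `(H + H', s, t)` for any graph `H'`
disjoint from `H` (disjoint union). -/
theorem stmt_3 {α β : Type} [Fintype α] [Fintype β]
    (H : SimpleGraph α) (H' : SimpleGraph β) (s t : α)
    (hinh : Inherent H s t) :
    Inherent (H ⊕g H') (Sum.inl s) (Sum.inl t) := by
  classical
  rintro V instV G ⟨f0, hf0inj, hf0adj⟩
  set B : Set V := Set.range (fun b : β => f0 (Sum.inr b)) with hB
  set W : Set V := {v : V | v ∉ closedNbhd G B} with hW
  have instW : Fintype W := Fintype.ofFinite _
  set G'' : SimpleGraph W := G.induce W with hG''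
  -- a vertex is in W iff it's not in B and not adjacent to B
  have hWmem : ∀ v : V, (v ∉ B ∧ ∀ b : β, ¬ G.Adj (f0 (Sum.inr b)) v) → v ∈ W := by
    intro v ⟨h1, h2⟩ hc
    rcases hc with hc | ⟨u, ⟨b, rfl⟩, hadj⟩
    · exact h1 hc
    · exact h2 b hadj
  have hmem : ∀ x : α, f0 (Sum.inl x) ∈ W := by
    intro x
    apply hWmem
    constructor
    · rintro ⟨b, hb⟩
      cases hf0inj hb
    · intro b hadj
      have := (hf0adj (Sum.inr b) (Sum.inl x)).mpr hadj
      simp [SimpleGraph.sum_adj] at this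
  -- copy of H in G''
  have hcopy : ∃ g : α → W, IsCopy G'' H g := by
    refine ⟨fun x => ⟨f0 (Sum.inl x), hmem x⟩, ?_, ?_⟩
    · intro x y hxy
      have : f0 (Sum.inl x) = f0 (Sum.inl y) := congrArg Subtype.val hxy
      exact Sum.inl_injective (hf0inj this)
    · intro x y
      have := hf0adj (Sum.inl x) (Sum.inl y)
      have h2 : H.Adj x y ↔ G.Adj (f0 (Sum.inl x)) (f0 (Sum.inl y)) := by
        simpa [SimpleGraph.sum_adj] using this
      exact h2
  obtain ⟨g, hgcopy, hgav⟩ := hinh W instW G'' hcopy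
  -- combined copy
  refine ⟨fun z => Sum.elim (fun x => (g x : V)) (fun b => f0 (Sum.inr b)) z, ?_, ?_⟩
  · constructor
    · rintro (x | b) (y | c) hxy <;> simp only [Sum.elim_inl, Sum.elim_inr] at hxy
      · exact congrArg Sum.inl (hgcopy.1 (Subtype.val_injective hxy))
      · exact absurd hxy.symm (fun h => (g x).2 (Or.inl ⟨c, h⟩))
      · exact absurd hxy (fun h => (g y).2 (Or.inl ⟨b, h⟩))
      · exact congrArg Sum.inr (Sum.inr_injective (hf0inj hxy))
    · rintro (x | b) (y | c)
      · have h2 : H.Adj x y ↔ G.Adj (g x : V) (g y) := hgcopy.2 x y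
        simpa [SimpleGraph.sum_adj] using h2
      · simp only [SimpleGraph.sum_adj, Sum.elim_inl, Sum.elim_inr]
        constructor
        · intro h; exact absurd h (by simp)
        · intro h
          exact absurd h (fun h => (g x).2 (Or.inr ⟨f0 (Sum.inr c), ⟨c, rfl⟩, h.symm⟩))
      · simp only [SimpleGraph.sum_adj, Sum.elim_inl, Sum.elim_inr]
        constructor
        · intro h; exact absurd h (by simp)
        · intro h
          exact absurd h (fun h => (g y).2 (Or.inr ⟨f0 (Sum.inr b), ⟨b, rfl⟩, h⟩))
      · simpa [SimpleGraph.sum_adj] using hf0adj (Sum.inr b) (Sum.inr c)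
  · -- avoidability
    intro s' t' hext
    obtain ⟨hst, hns, hnt, hnadj, hadjs, hadjt, honlys, honlyt⟩ := hext
    simp only [Sum.elim_inl] at hadjs hadjt
    have hs'W : s' ∈ W := by
      apply hWmem
      refine ⟨fun ⟨b, hb⟩ => hns (Sum.inr b) hb, fun b hadj => ?_⟩
      refine honlys (Sum.inr b) ?_ hadj
      simp only [Sum.elim_inl, Sum.elim_inr]
      intro h
      exact (g s).2 (Or.inl ⟨b, h⟩)
    have ht'W : t' ∈ W := by
      apply hWmem
      refine ⟨fun ⟨b, hb⟩ => hnt (Sum.inr b) hb, fun b hadj => ?_⟩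
      refine honlyt (Sum.inr b) ?_ hadj
      simp only [Sum.elim_inl, Sum.elim_inr]
      intro h
      exact (g t).2 (Or.inl ⟨b, h⟩)
    -- (⟨s'⟩, ⟨t'⟩) is an extension of g in G''
    have hext'' : IsExtension G'' H g s t ⟨s', hs'W⟩ ⟨t', ht'W⟩ := by
      refine ⟨fun h => hst (congrArg Subtype.val h), ?_, ?_, hnadj, hadjs, hadjt, ?_, ?_⟩
      · intro x h; exact hns (Sum.inl x) (congrArg Subtype.val h)
      · intro x h; exact hnt (Sum.inl x) (congrArg Subtype.val h)
      · intro x h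
        exact honlys (Sum.inl x) (fun hc => h (Subtype.val_injective hc))
      · intro x h
        exact honlyt (Sum.inl x) (fun hc => h (Subtype.val_injective hc))
    obtain ⟨p, ⟨hpath, hind⟩, havoid⟩ := hgav ⟨s', hs'W⟩ ⟨t', ht'W⟩ hext''
    -- map the path into G
    let emb : G'' ↪g G := SimpleGraph.Embedding.induce W
    have hembval : ∀ w : W, emb w = (w : V) := fun _ => rfl
    refine ⟨p.map emb.toHom, ⟨?_, ?_⟩, ?_⟩
    · exact p.map_isPath_of_injective emb.injective hpath
    · intro u hu v hv hadj
      replace hu : u ∈ p.support.map emb.toHom := by rw [← SimpleGraph.Walk.support_map]; exact hu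
      replace hv : v ∈ p.support.map emb.toHom := by rw [← SimpleGraph.Walk.support_map]; exact hv
      rw [List.mem_map] at hu hv
      obtain ⟨u0, hu0, rfl⟩ := hu
      obtain ⟨v0, hv0, rfl⟩ := hv
      have hadj'' : G''.Adj u0 v0 := hadj
      have := hind u0 hu0 v0 hv0 hadj''
      have h2 := List.mem_map_of_mem (f := Sym2.map emb.toHom) this
      rw [← SimpleGraph.Walk.edges_map] at h2
      exact h2
    · intro v hv hvN
      replace hv : v ∈ p.support.map emb.toHom := by rw [← SimpleGraph.Walk.support_map]; exact hv
      rw [List.mem_map] at hv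
      obtain ⟨v0, hv0, rfl⟩ := hv
      have hv0W : (v0 : V) ∈ W := v0.2
      -- v0 ∈ closedNbhd G'' (range g ∪ {s'0, t'0}) ?
      have key : (v0 : V) ∈ closedNbhd G (Set.range
            (Sum.elim (fun x => (g x : V)) (fun b => f0 (Sum.inr b))) ∪ {s', t'}) →
          v0 ∈ closedNbhd G'' (Set.range g ∪ {⟨s', hs'W⟩, ⟨t', ht'W⟩}) ∨ False := by
        intro h
        rcases h with h | ⟨u, hu, hadj⟩
        · rcases h with ⟨z, hz⟩ | h
          · cases z with
            | inl x =>
              left; left; left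
              exact ⟨x, Subtype.val_injective hz⟩
            | inr b =>
              exact absurd (Or.inl ⟨b, hz⟩) hv0W
          · left; left; right
            rcases h with h | h
            · exact Or.inl (Subtype.val_injective h)
            · exact Or.inr (Subtype.val_injective h)
        · rcases hu with ⟨z, hz⟩ | hu
          · cases z with
            | inl x =>
              left; right
              exact ⟨g x, Or.inl ⟨x, rfl⟩, by subst hz; exact hadj⟩
            | inr b =>
              exact absurd (Or.inr ⟨u, ⟨b, hz⟩, hadj⟩) hv0W
          · left; right
            rcases hu with hu | hu
            · exact ⟨⟨s', hs'W⟩, Or.inr (Or.inl rfl), by subst hu; exact hadj⟩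
            · exact ⟨⟨t', ht'W⟩, Or.inr (Or.inr rfl), by subst hu; exact hadj⟩
      rcases key hvN with h | h
      · rcases havoid v0 hv0 h with h | h
        · left; exact congrArg Subtype.val h
        · right; exact congrArg Subtype.val h
      · exact h.elim
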